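/- Let $G_1,G_2$ be graphs, $T_1\subset V(G_1)$, $T_2\subset V(G_2)$, and suppose $r$ connected components of the induced subgraph $(G_1)_{V(G_1)\setminus T_1}$ and $s$ connected components of $(G_2)_{V(G_2)\setminus T_2}$ each contain an induced path of length 2. Then the index of nilpotency of the binomial edge ideal $J_{G_1,G_2}$ satisfies $\mathrm{nilpot}(J_{G_1,G_2})\geq rs+1$, i.e., $(\sqrt{J_{G_1,G_2}})^{rs}\not\subset J_{G_1,G_2}$. -/

import Mathlib

open MvPolynomial

/-- The binomial edge ideal of a pair of graphs. -/
noncomputable def pairIdeal (K : Type) [Field K] {α β : Type}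
    (G1 : SimpleGraph α) (G2 : SimpleGraph β) : Ideal (MvPolynomial (α × β) K) :=
  Ideal.span {p | ∃ i j k l, G1.Adj i j ∧ G2.Adj k l ∧
    p = X (i, k) * X (j, l) - X (i, l) * X (j, k)}

/-! ### Combinatorial core -/

def RoleAdj (ρ ρ' : Fin 3) : Prop :=
  (ρ = 0 ∧ ρ' = 1) ∨ (ρ = 1 ∧ ρ' = 0) ∨ (ρ = 1 ∧ ρ' = 2) ∨ (ρ = 2 ∧ ρ' = 1)

def DiagClass (E : Fin 3 → Fin 3 → ℕ) : Prop :=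
    (E 0 0 = 1 ∧ E 0 1 = 0 ∧ E 0 2 = 0 ∧ E 1 0 = 0 ∧ E 1 1 = 1 ∧ E 1 2 = 0 ∧
      E 2 0 = 0 ∧ E 2 1 = 0 ∧ E 2 2 = 1) ∨
    (E 0 0 = 0 ∧ E 0 1 = 1 ∧ E 0 2 = 0 ∧ E 1 0 = 1 ∧ E 1 1 = 0 ∧ E 1 2 = 0 ∧
      E 2 0 = 0 ∧ E 2 1 = 0 ∧ E 2 2 = 1) ∨
    (E 0 0 = 1 ∧ E 0 1 = 0 ∧ E 0 2 = 0 ∧ E 1 0 = 0 ∧ E 1 1 = 0 ∧ E 1 2 = 1 ∧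
      E 2 0 = 0 ∧ E 2 1 = 1 ∧ E 2 2 = 0)

set_option maxHeartbeats 1000000 in
lemma move_inv (E : Fin 3 → Fin 3 → ℕ) {ρ ρ' σ σ' : Fin 3}
    (hρ : RoleAdj ρ ρ') (hσ : RoleAdj σ σ') :
    DiagClass (fun x y => E x y + (if x = ρ ∧ y = σ then 1 else 0)
      + (if x = ρ' ∧ y = σ' then 1 else 0)) ↔
    DiagClass (fun x y => E x y + (if x = ρ ∧ y = σ' then 1 else 0)
      + (if x = ρ' ∧ y = σ then 1 else 0)) := by
  obtain (⟨rfl, rfl⟩|⟨rfl, rfl⟩|⟨rfl, rfl⟩|⟨rfl, rfl⟩) := hρ <;>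
    obtain (⟨rfl, rfl⟩|⟨rfl, rfl⟩|⟨rfl, rfl⟩|⟨rfl, rfl⟩) := hσ <;>
      (simp only [DiagClass, Fin.reduceEq, and_true, true_and, and_false, false_and,
        and_self, if_true, if_false, reduceIte, add_zero];
       constructor <;> rintro (h|h|h) <;> omega)

/-! ### The coefficient functional -/

section Functional

variable {α β : Type} (K : Type) [Field K] {r s : ℕ}
variable (ℓ1 : Fin r → Fin 3 → α) (ℓ2 : Fin s → Fin 3 → β)

def Labeled (μ : (α × β) →₀ ℕ) : Prop :=
  ∀ q ∈ μ.support, ∃ (i : Fin r) (ρ : Fin 3) (j : Fin s) (σ : Fin 3), q = (ℓ1 i ρ, ℓ2 j σ)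

def Blk (μ : (α × β) →₀ ℕ) (i : Fin r) (j : Fin s) : Fin 3 → Fin 3 → ℕ :=
  fun ρ σ => μ (ℓ1 i ρ, ℓ2 j σ)

open Classical in
noncomputable def cf (μ : (α × β) →₀ ℕ) : K :=
  if (Labeled ℓ1 ℓ2 μ ∧ ∀ i j, DiagClass (Blk ℓ1 ℓ2 μ i j)) then 1 else 0

noncomputable def lam (f : MvPolynomial (α × β) K) : K :=
  (AddMonoidAlgebra.coeff f).sum fun μ a => a * cf K ℓ1 ℓ2 μ

lemma lam_monomial (μ : (α × β) →₀ ℕ) (a : K) :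
    lam K ℓ1 ℓ2 (monomial μ a) = a * cf K ℓ1 ℓ2 μ := by
  unfold lam
  exact sum_monomial_eq (zero_mul _)

lemma lam_sub (f g : MvPolynomial (α × β) K) :
    lam K ℓ1 ℓ2 (f - g) = lam K ℓ1 ℓ2 f - lam K ℓ1 ℓ2 g :=
  Finsupp.sum_sub_index (fun _ _ _ => sub_mul _ _ _)

lemma lam_add (f g : MvPolynomial (α × β) K) :
    lam K ℓ1 ℓ2 (f + g) = lam K ℓ1 ℓ2 f + lam K ℓ1 ℓ2 g :=
  Finsupp.sum_add_index' (fun _ => zero_mul _) (fun _ _ _ => add_mul _ _ _)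

variable {ℓ1 ℓ2}

/-- unlabeled first coordinate kills `cf`. -/
lemma cf_eq_zero_left {u : α} (hu : ∀ i ρ, u ≠ ℓ1 i ρ) {μ : (α × β) →₀ ℕ}
    {v : β} (hμ : μ (u, v) ≠ 0) : cf K ℓ1 ℓ2 μ = 0 := by
  unfold cf
  rw [if_neg]
  rintro ⟨hL, -⟩
  obtain ⟨i, ρ, j, σ, hq⟩ := hL (u, v) (Finsupp.mem_support_iff.2 hμ)
  exact hu i ρ (congrArg Prod.fst hq)

lemma cf_eq_zero_right {v : β} (hv : ∀ j σ, v ≠ ℓ2 j σ) {μ : (α × β) →₀ ℕ}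
    {u : α} (hμ : μ (u, v) ≠ 0) : cf K ℓ1 ℓ2 μ = 0 := by
  unfold cf
  rw [if_neg]
  rintro ⟨hL, -⟩
  obtain ⟨i, ρ, j, σ, hq⟩ := hL (u, v) (Finsupp.mem_support_iff.2 hμ)
  exact hv j σ (congrArg Prod.snd hq)

variable (hinj1 : ∀ i ρ i' ρ', ℓ1 i ρ = ℓ1 i' ρ' → i = i' ∧ ρ = ρ')
variable (hinj2 : ∀ j σ j' σ', ℓ2 j σ = ℓ2 j' σ' → j = j' ∧ σ = σ')

lemma labeled_add_single (μ : (α × β) →₀ ℕ) (i : Fin r) (ρ : Fin 3) (j : Fin s) (σ : Fin 3) :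
    Labeled ℓ1 ℓ2 (μ + Finsupp.single (ℓ1 i ρ, ℓ2 j σ) 1) ↔ Labeled ℓ1 ℓ2 μ := by
  constructor
  · intro h q hq
    refine h q ?_
    rw [Finsupp.mem_support_iff] at hq ⊢
    rw [Finsupp.add_apply]
    omega
  · intro h q hq
    rw [Finsupp.mem_support_iff, Finsupp.add_apply] at hq
    by_cases hqe : q = (ℓ1 i ρ, ℓ2 j σ)
    · exact ⟨i, ρ, j, σ, hqe⟩
    · refine h q ?_
      rw [Finsupp.mem_support_iff]
      have h0 : (Finsupp.single (ℓ1 i ρ, ℓ2 j σ) (1:ℕ)) q = 0 :=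
        Finsupp.single_apply_eq_zero.2 (fun h' => absurd h' hqe)
      omega

include hinj1 hinj2 in
lemma blk_add_single (μ : (α × β) →₀ ℕ) (i : Fin r) (ρ : Fin 3) (j : Fin s) (σ : Fin 3)
    (i₀ : Fin r) (j₀ : Fin s) (x y : Fin 3) :
    Blk ℓ1 ℓ2 (μ + Finsupp.single (ℓ1 i ρ, ℓ2 j σ) 1) i₀ j₀ x y
      = Blk ℓ1 ℓ2 μ i₀ j₀ x y
        + (if i₀ = i ∧ j₀ = j ∧ x = ρ ∧ y = σ then 1 else 0) := by
  unfold Blk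
  rw [Finsupp.add_apply]
  congr 1
  classical
  rw [Finsupp.single_apply]
  by_cases h : (ℓ1 i ρ, ℓ2 j σ) = (ℓ1 i₀ x, ℓ2 j₀ y)
  · rw [if_pos h, if_pos]
    obtain ⟨h1, h2⟩ := Prod.mk.injEq .. ▸ h
    obtain ⟨hi, hρ⟩ := hinj1 _ _ _ _ h1
    obtain ⟨hj, hσ⟩ := hinj2 _ _ _ _ h2
    exact ⟨hi.symm, hj.symm, hρ.symm, hσ.symm⟩
  · rw [if_neg h, if_neg]
    rintro ⟨rfl, rfl, rfl, rfl⟩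
    exact h rfl

section Rel

variable {G1 : SimpleGraph α} {G2 : SimpleGraph β}
variable (hstruct1 : ∀ i ρ i' ρ', G1.Adj (ℓ1 i ρ) (ℓ1 i' ρ') → i = i' ∧ RoleAdj ρ ρ')
variable (hstruct2 : ∀ j σ j' σ', G2.Adj (ℓ2 j σ) (ℓ2 j' σ') → j = j' ∧ RoleAdj σ σ')

include hinj1 hinj2 hstruct1 hstruct2 in
lemma cf_rel {u u' : α} {v v' : β} (hu : G1.Adj u u') (hv : G2.Adj v v') (μ : (α × β) →₀ ℕ) :
    cf K ℓ1 ℓ2 (μ + Finsupp.single (u, v) 1 + Finsupp.single (u', v') 1)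
      = cf K ℓ1 ℓ2 (μ + Finsupp.single (u, v') 1 + Finsupp.single (u', v) 1) := by
  classical
  -- dispose of unlabeled cases
  by_cases hu1 : ∃ i ρ, u = ℓ1 i ρ
  rotate_left
  · push_neg at hu1
    have l0 : ((μ + Finsupp.single (u, v) 1 + Finsupp.single (u', v') 1 : (α × β) →₀ ℕ)) (u, v) ≠ 0 := by
      rw [Finsupp.add_apply, Finsupp.add_apply, Finsupp.single_eq_same]; omega
    have r0 : ((μ + Finsupp.single (u, v') 1 + Finsupp.single (u', v) 1 : (α × β) →₀ ℕ)) (u, v') ≠ 0 := by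
      rw [Finsupp.add_apply, Finsupp.add_apply, Finsupp.single_eq_same]
      omega
    rw [cf_eq_zero_left K hu1 l0, cf_eq_zero_left K hu1 r0]
  by_cases hu2 : ∃ i ρ, u' = ℓ1 i ρ
  rotate_left
  · push_neg at hu2
    have l0 : ((μ + Finsupp.single (u, v) 1 + Finsupp.single (u', v') 1 : (α × β) →₀ ℕ)) (u', v') ≠ 0 := by
      rw [Finsupp.add_apply, Finsupp.add_apply, Finsupp.single_eq_same]; omega
    have r0 : ((μ + Finsupp.single (u, v') 1 + Finsupp.single (u', v) 1 : (α × β) →₀ ℕ)) (u', v) ≠ 0 := by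
      rw [Finsupp.add_apply, Finsupp.add_apply, Finsupp.single_eq_same]; omega
    rw [cf_eq_zero_left K hu2 l0, cf_eq_zero_left K hu2 r0]
  by_cases hv1 : ∃ j σ, v = ℓ2 j σ
  rotate_left
  · push_neg at hv1
    have l0 : ((μ + Finsupp.single (u, v) 1 + Finsupp.single (u', v') 1 : (α × β) →₀ ℕ)) (u, v) ≠ 0 := by
      rw [Finsupp.add_apply, Finsupp.add_apply, Finsupp.single_eq_same]; omega
    have r0 : ((μ + Finsupp.single (u, v') 1 + Finsupp.single (u', v) 1 : (α × β) →₀ ℕ)) (u', v) ≠ 0 := by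
      rw [Finsupp.add_apply, Finsupp.add_apply, Finsupp.single_eq_same]; omega
    rw [cf_eq_zero_right K hv1 l0, cf_eq_zero_right K hv1 r0]
  by_cases hv2 : ∃ j σ, v' = ℓ2 j σ
  rotate_left
  · push_neg at hv2
    have l0 : ((μ + Finsupp.single (u, v) 1 + Finsupp.single (u', v') 1 : (α × β) →₀ ℕ)) (u', v') ≠ 0 := by
      rw [Finsupp.add_apply, Finsupp.add_apply, Finsupp.single_eq_same]; omega
    have r0 : ((μ + Finsupp.single (u, v') 1 + Finsupp.single (u', v) 1 : (α × β) →₀ ℕ)) (u, v') ≠ 0 := by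
      rw [Finsupp.add_apply, Finsupp.add_apply, Finsupp.single_eq_same]; omega
    rw [cf_eq_zero_right K hv2 l0, cf_eq_zero_right K hv2 r0]
  obtain ⟨i, ρ, rfl⟩ := hu1
  obtain ⟨i', ρ', rfl⟩ := hu2
  obtain ⟨j, σ, rfl⟩ := hv1
  obtain ⟨j', σ', rfl⟩ := hv2
  obtain ⟨rfl, hρ⟩ := hstruct1 _ _ _ _ hu
  obtain ⟨rfl, hσ⟩ := hstruct2 _ _ _ _ hv
  unfold cf
  refine if_congr (and_congr ?_ ?_) rfl rfl
  · rw [labeled_add_single, labeled_add_single, labeled_add_single, labeled_add_single]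
  · refine forall_congr' fun i₀ => forall_congr' fun j₀ => ?_
    by_cases hij : i₀ = i ∧ j₀ = j
    · obtain ⟨rfl, rfl⟩ := hij
      have hL : Blk ℓ1 ℓ2 (μ + Finsupp.single (ℓ1 i₀ ρ, ℓ2 j₀ σ) 1
          + Finsupp.single (ℓ1 i₀ ρ', ℓ2 j₀ σ') 1) i₀ j₀
          = fun x y => Blk ℓ1 ℓ2 μ i₀ j₀ x y + (if x = ρ ∧ y = σ then 1 else 0)
            + (if x = ρ' ∧ y = σ' then 1 else 0) := by
        funext x y
        rw [blk_add_single hinj1 hinj2, blk_add_single hinj1 hinj2]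
        simp only [true_and]
      have hR : Blk ℓ1 ℓ2 (μ + Finsupp.single (ℓ1 i₀ ρ, ℓ2 j₀ σ') 1
          + Finsupp.single (ℓ1 i₀ ρ', ℓ2 j₀ σ) 1) i₀ j₀
          = fun x y => Blk ℓ1 ℓ2 μ i₀ j₀ x y + (if x = ρ ∧ y = σ' then 1 else 0)
            + (if x = ρ' ∧ y = σ then 1 else 0) := by
        funext x y
        rw [blk_add_single hinj1 hinj2, blk_add_single hinj1 hinj2]
        simp only [true_and]
      rw [hL, hR]
      exact move_inv _ hρ hσ
    · have hnel : ∀ (x y ρ₀ σ₀ : Fin 3),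
          ¬(i₀ = i ∧ j₀ = j ∧ x = ρ₀ ∧ y = σ₀) := by
        intro x y ρ₀ σ₀ hcon
        exact hij ⟨hcon.1, hcon.2.1⟩
      have hL : Blk ℓ1 ℓ2 (μ + Finsupp.single (ℓ1 i ρ, ℓ2 j σ) 1
          + Finsupp.single (ℓ1 i ρ', ℓ2 j σ') 1) i₀ j₀ = Blk ℓ1 ℓ2 μ i₀ j₀ := by
        funext x y
        rw [blk_add_single hinj1 hinj2, blk_add_single hinj1 hinj2,
          if_neg (hnel x y ρ' σ'), if_neg (hnel x y ρ σ), add_zero, add_zero]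
      have hR : Blk ℓ1 ℓ2 (μ + Finsupp.single (ℓ1 i ρ, ℓ2 j σ') 1
          + Finsupp.single (ℓ1 i ρ', ℓ2 j σ) 1) i₀ j₀ = Blk ℓ1 ℓ2 μ i₀ j₀ := by
        funext x y
        rw [blk_add_single hinj1 hinj2, blk_add_single hinj1 hinj2,
          if_neg (hnel x y ρ' σ), if_neg (hnel x y ρ σ'), add_zero, add_zero]
      rw [hL, hR]

include hinj1 hinj2 hstruct1 hstruct2 in
lemma lam_pairIdeal {f : MvPolynomial (α × β) K} (hf : f ∈ pairIdeal K G1 G2) :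
    lam K ℓ1 ℓ2 f = 0 := by
  have key : ∀ x ∈ {p : MvPolynomial (α × β) K | ∃ i j k l, G1.Adj i j ∧ G2.Adj k l ∧
      p = X (i, k) * X (j, l) - X (i, l) * X (j, k)},
      ∀ g : MvPolynomial (α × β) K, lam K ℓ1 ℓ2 (g * x) = 0 := by
    rintro x ⟨a, b, c, d, hab, hcd, rfl⟩ g
    induction g using MvPolynomial.induction_on' with
    | add p q hp hq => rw [add_mul, lam_add, hp, hq, add_zero]
    | monomial μ k =>
      rw [mul_sub, lam_sub]
      rw [show (X (a, c) * X (b, d) : MvPolynomial (α × β) K)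
          = monomial (Finsupp.single (a, c) 1 + Finsupp.single (b, d) 1) 1 by
        rw [X, X, monomial_mul, one_mul]]
      rw [show (X (a, d) * X (b, c) : MvPolynomial (α × β) K)
          = monomial (Finsupp.single (a, d) 1 + Finsupp.single (b, c) 1) 1 by
        rw [X, X, monomial_mul, one_mul]]
      rw [monomial_mul, monomial_mul, mul_one, lam_monomial, lam_monomial,
        ← add_assoc, ← add_assoc]
      rw [cf_rel K hinj1 hinj2 hstruct1 hstruct2 hab hcd μ]
      ring
  -- span induction
  have : ∀ g : MvPolynomial (α × β) K, lam K ℓ1 ℓ2 (g * f) = 0 := by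
    refine Submodule.span_induction key ?_ ?_ ?_ hf
    · intro g; rw [mul_zero]
      simp [lam, Finsupp.sum_zero_index]
    · intro x y _ _ hx hy g
      rw [mul_add, lam_add, hx, hy, add_zero]
    · intro a x _ hx g
      rw [smul_eq_mul, ← mul_assoc, hx]
  have h1 := this 1
  rwa [one_mul] at h1

end Rel

/-! ### The witness -/

variable (ℓ1 ℓ2)

noncomputable def Pm (i : Fin r) (j : Fin s) : MvPolynomial (α × β) K :=
  X (ℓ1 i 1, ℓ2 j 1) * (X (ℓ1 i 0, ℓ2 j 0) * X (ℓ1 i 2, ℓ2 j 2)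
    - X (ℓ1 i 0, ℓ2 j 2) * X (ℓ1 i 2, ℓ2 j 0))

noncomputable def μD (i : Fin r) (j : Fin s) : (α × β) →₀ ℕ :=
  Finsupp.single (ℓ1 i 1, ℓ2 j 1) 1 + Finsupp.single (ℓ1 i 0, ℓ2 j 0) 1
    + Finsupp.single (ℓ1 i 2, ℓ2 j 2) 1

noncomputable def μA (i : Fin r) (j : Fin s) : (α × β) →₀ ℕ :=
  Finsupp.single (ℓ1 i 1, ℓ2 j 1) 1 + Finsupp.single (ℓ1 i 0, ℓ2 j 2) 1
    + Finsupp.single (ℓ1 i 2, ℓ2 j 0) 1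

lemma XXX (p q w : α × β) : (X p * X q * X w : MvPolynomial (α × β) K)
    = monomial (Finsupp.single p 1 + Finsupp.single q 1 + Finsupp.single w 1) 1 := by
  rw [X, X, X, monomial_mul, monomial_mul]
  simp only [one_mul, mul_one]

lemma Pm_eq (i : Fin r) (j : Fin s) :
    Pm K ℓ1 ℓ2 i j = monomial (μA ℓ1 ℓ2 i j) (-1 : K) + monomial (μD ℓ1 ℓ2 i j) 1 := by
  unfold Pm μA μD
  rw [mul_sub, ← mul_assoc, ← mul_assoc, XXX, XXX]
  have : (monomial (Finsupp.single (ℓ1 i 1, ℓ2 j 1) 1 + Finsupp.single (ℓ1 i 0, ℓ2 j 2) 1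
      + Finsupp.single (ℓ1 i 2, ℓ2 j 0) 1)) (-1 : K)
      = -(monomial (Finsupp.single (ℓ1 i 1, ℓ2 j 1) 1 + Finsupp.single (ℓ1 i 0, ℓ2 j 2) 1
      + Finsupp.single (ℓ1 i 2, ℓ2 j 0) 1)) (1 : K) := by
    rw [← map_neg]
  rw [this]
  ring

lemma prod_monomial {ι : Type} (t : Finset ι) (g : ι → ((α × β) →₀ ℕ)) (c : ι → K) :
    ∏ x ∈ t, (monomial (g x) (c x) : MvPolynomial (α × β) K)
      = monomial (∑ x ∈ t, g x) (∏ x ∈ t, c x) := by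
  classical
  induction t using Finset.induction with
  | empty => simp [monomial_zero']
  | insert _ _ hx ih =>
    rw [Finset.prod_insert hx, Finset.sum_insert hx, Finset.prod_insert hx, ih, monomial_mul]

section Nu

variable (hinj1 : ∀ i ρ i' ρ', ℓ1 i ρ = ℓ1 i' ρ' → i = i' ∧ ρ = ρ')
variable (hinj2 : ∀ j σ j' σ', ℓ2 j σ = ℓ2 j' σ' → j = j' ∧ σ = σ')

noncomputable def nu (t : Finset (Fin r × Fin s)) : (α × β) →₀ ℕ :=
  (∑ x ∈ t, μA ℓ1 ℓ2 x.1 x.2) + ∑ x ∈ Finset.univ \ t, μD ℓ1 ℓ2 x.1 x.2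

include hinj1 in
lemma l1_eq_iff {i i' : Fin r} {ρ ρ' : Fin 3} : ℓ1 i ρ = ℓ1 i' ρ' ↔ (i = i' ∧ ρ = ρ') :=
  ⟨hinj1 _ _ _ _, by rintro ⟨rfl, rfl⟩; rfl⟩

include hinj2 in
lemma l2_eq_iff {j j' : Fin s} {σ σ' : Fin 3} : ℓ2 j σ = ℓ2 j' σ' ↔ (j = j' ∧ σ = σ') :=
  ⟨hinj2 _ _ _ _, by rintro ⟨rfl, rfl⟩; rfl⟩

include hinj1 hinj2 in
lemma muD_apply (x1 : Fin r) (x2 : Fin s) (i : Fin r) (ρ : Fin 3) (j : Fin s) (σ : Fin 3) :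
    μD ℓ1 ℓ2 x1 x2 (ℓ1 i ρ, ℓ2 j σ)
      = if (x1, x2) = (i, j) then (if ρ = σ then 1 else 0) else 0 := by
  classical
  unfold μD
  rw [Finsupp.add_apply, Finsupp.add_apply, Finsupp.single_apply, Finsupp.single_apply,
    Finsupp.single_apply]
  simp only [Prod.mk.injEq, l1_eq_iff ℓ1 hinj1, l2_eq_iff ℓ2 hinj2]
  by_cases h1 : x1 = i <;> by_cases h2 : x2 = j <;>
    fin_cases ρ <;> fin_cases σ <;> simp [h1, h2]

include hinj1 hinj2 in
lemma muA_apply (x1 : Fin r) (x2 : Fin s) (i : Fin r) (ρ : Fin 3) (j : Fin s) (σ : Fin 3) :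
    μA ℓ1 ℓ2 x1 x2 (ℓ1 i ρ, ℓ2 j σ)
      = if (x1, x2) = (i, j)
          then (if (ρ = 0 ∧ σ = 2) ∨ (ρ = 1 ∧ σ = 1) ∨ (ρ = 2 ∧ σ = 0) then 1 else 0)
          else 0 := by
  classical
  unfold μA
  rw [Finsupp.add_apply, Finsupp.add_apply, Finsupp.single_apply, Finsupp.single_apply,
    Finsupp.single_apply]
  simp only [Prod.mk.injEq, l1_eq_iff ℓ1 hinj1, l2_eq_iff ℓ2 hinj2]
  by_cases h1 : x1 = i <;> by_cases h2 : x2 = j <;>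
    fin_cases ρ <;> fin_cases σ <;> simp [h1, h2]

lemma labeled_nu (t : Finset (Fin r × Fin s)) : Labeled ℓ1 ℓ2 (nu ℓ1 ℓ2 t) := by
  intro q hq
  by_contra hq'
  push_neg at hq'
  rw [Finsupp.mem_support_iff] at hq
  refine hq ?_
  unfold nu
  rw [Finsupp.add_apply, Finsupp.finset_sum_apply, Finsupp.finset_sum_apply]
  rw [Finset.sum_eq_zero, Finset.sum_eq_zero, add_zero]
  · intro x _
    unfold μD
    rw [Finsupp.add_apply, Finsupp.add_apply]
    rw [Finsupp.single_eq_of_ne' (fun h => hq' x.1 1 x.2 1 h.symm),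
      Finsupp.single_eq_of_ne' (fun h => hq' x.1 0 x.2 0 h.symm),
      Finsupp.single_eq_of_ne' (fun h => hq' x.1 2 x.2 2 h.symm)]
    rfl
  · intro x _
    unfold μA
    rw [Finsupp.add_apply, Finsupp.add_apply]
    rw [Finsupp.single_eq_of_ne' (fun h => hq' x.1 1 x.2 1 h.symm),
      Finsupp.single_eq_of_ne' (fun h => hq' x.1 0 x.2 2 h.symm),
      Finsupp.single_eq_of_ne' (fun h => hq' x.1 2 x.2 0 h.symm)]
    rfl

include hinj1 hinj2 in
lemma blk_nu (t : Finset (Fin r × Fin s)) (i : Fin r) (j : Fin s) :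
    Blk ℓ1 ℓ2 (nu ℓ1 ℓ2 t) i j
      = if (i, j) ∈ t
          then (fun ρ σ => if (ρ = 0 ∧ σ = 2) ∨ (ρ = 1 ∧ σ = 1) ∨ (ρ = 2 ∧ σ = 0)
            then 1 else 0)
          else (fun ρ σ => if ρ = σ then 1 else 0) := by
  classical
  funext ρ σ
  show nu ℓ1 ℓ2 t (ℓ1 i ρ, ℓ2 j σ) = _
  unfold nu
  rw [Finsupp.add_apply, Finsupp.finset_sum_apply, Finsupp.finset_sum_apply]
  have hA : ∑ x ∈ t, μA ℓ1 ℓ2 x.1 x.2 (ℓ1 i ρ, ℓ2 j σ)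
      = if (i, j) ∈ t
        then (if (ρ = 0 ∧ σ = 2) ∨ (ρ = 1 ∧ σ = 1) ∨ (ρ = 2 ∧ σ = 0) then 1 else 0) else 0 := by
    rw [Finset.sum_congr rfl (fun x _ => muA_apply ℓ1 ℓ2 hinj1 hinj2 x.1 x.2 i ρ j σ)]
    simp [Finset.sum_ite_eq]
  have hD : ∑ x ∈ Finset.univ \ t, μD ℓ1 ℓ2 x.1 x.2 (ℓ1 i ρ, ℓ2 j σ)
      = if (i, j) ∈ Finset.univ \ t then (if ρ = σ then 1 else 0) else 0 := by
    rw [Finset.sum_congr rfl (fun x _ => muD_apply ℓ1 ℓ2 hinj1 hinj2 x.1 x.2 i ρ j σ)]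
    simp [Finset.sum_ite_eq]
  rw [hA, hD]
  by_cases hm : (i, j) ∈ t
  · simp [hm]
  · simp [hm]

include hinj1 hinj2 in
lemma cf_nu (t : Finset (Fin r × Fin s)) :
    cf K ℓ1 ℓ2 (nu ℓ1 ℓ2 t) = if t = ∅ then 1 else 0 := by
  classical
  by_cases ht : t = ∅
  · subst ht
    rw [if_pos rfl]
    unfold cf
    rw [if_pos]
    refine ⟨labeled_nu ℓ1 ℓ2 ∅, fun i j => ?_⟩
    rw [blk_nu ℓ1 ℓ2 hinj1 hinj2, if_neg (Finset.notMem_empty (i, j))]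
    exact Or.inl (by norm_num; decide)
  · rw [if_neg ht]
    obtain ⟨⟨i, j⟩, hij⟩ := Finset.nonempty_iff_ne_empty.2 ht
    unfold cf
    rw [if_neg]
    rintro ⟨-, hD⟩
    have := hD i j
    rw [blk_nu ℓ1 ℓ2 hinj1 hinj2, if_pos hij] at this
    rcases this with h|h|h <;> simp_all

include hinj1 hinj2 in
lemma lam_w :
    lam K ℓ1 ℓ2 (∏ ij : Fin r × Fin s, Pm K ℓ1 ℓ2 ij.1 ij.2) = 1 := by
  classical
  have hlam0 : lam K ℓ1 ℓ2 (0 : MvPolynomial (α × β) K) = 0 := by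
    unfold lam
    exact Finsupp.sum_zero_index
  rw [Finset.prod_congr rfl (fun ij _ => Pm_eq K ℓ1 ℓ2 ij.1 ij.2)]
  rw [Finset.prod_add]
  rw [show (lam K ℓ1 ℓ2 : MvPolynomial (α × β) K → K)
    = (AddMonoidHom.mk' (lam K ℓ1 ℓ2) (lam_add K ℓ1 ℓ2) : MvPolynomial (α × β) K →+ K) from rfl]
  rw [map_sum]
  have hterm : ∀ t ∈ (Finset.univ : Finset (Fin r × Fin s)).powerset,
      (AddMonoidHom.mk' (lam K ℓ1 ℓ2) (lam_add K ℓ1 ℓ2))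
        ((∏ x ∈ t, monomial (μA ℓ1 ℓ2 x.1 x.2) (-1 : K))
          * ∏ x ∈ Finset.univ \ t, monomial (μD ℓ1 ℓ2 x.1 x.2) (1 : K))
      = if t = ∅ then 1 else 0 := by
    intro t _
    rw [prod_monomial, prod_monomial, monomial_mul]
    show lam K ℓ1 ℓ2 _ = _
    rw [lam_monomial]
    show _ * cf K ℓ1 ℓ2 (nu ℓ1 ℓ2 t) = _
    rw [cf_nu K ℓ1 ℓ2 hinj1 hinj2 t]
    by_cases ht : t = ∅
    · subst ht; simp
    · simp [ht]
  rw [Finset.sum_congr rfl hterm]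
  rw [Finset.sum_ite_eq' _ (∅ : Finset (Fin r × Fin s)) (fun _ => (1 : K))]
  rw [if_pos (Finset.empty_mem_powerset _)]

end Nu

end Functional

theorem main_lower_bound {α β : Type} (K : Type) [Field K] {r s : ℕ}
    (G1 : SimpleGraph α) (G2 : SimpleGraph β)
    (ℓ1 : Fin r → Fin 3 → α) (ℓ2 : Fin s → Fin 3 → β)
    (hinj1 : ∀ i ρ i' ρ', ℓ1 i ρ = ℓ1 i' ρ' → i = i' ∧ ρ = ρ')
    (hinj2 : ∀ j σ j' σ', ℓ2 j σ = ℓ2 j' σ' → j = j' ∧ σ = σ')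
    (hadj1 : ∀ i, G1.Adj (ℓ1 i 0) (ℓ1 i 1) ∧ G1.Adj (ℓ1 i 1) (ℓ1 i 2))
    (hadj2 : ∀ j, G2.Adj (ℓ2 j 0) (ℓ2 j 1) ∧ G2.Adj (ℓ2 j 1) (ℓ2 j 2))
    (hstruct1 : ∀ i ρ i' ρ', G1.Adj (ℓ1 i ρ) (ℓ1 i' ρ') → i = i' ∧ RoleAdj ρ ρ')
    (hstruct2 : ∀ j σ j' σ', G2.Adj (ℓ2 j σ) (ℓ2 j' σ') → j = j' ∧ RoleAdj σ σ') :
    ¬ ((pairIdeal K G1 G2).radical ^ (r * s) ≤ pairIdeal K G1 G2) := by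
  intro hle
  set J := pairIdeal K G1 G2 with hJ
  have hPmem : ∀ ij : Fin r × Fin s, Pm K ℓ1 ℓ2 ij.1 ij.2 ∈ J.radical := by
    rintro ⟨i, j⟩
    refine ⟨2, ?_⟩
    have hD1 : (X (ℓ1 i 0, ℓ2 j 0) * X (ℓ1 i 1, ℓ2 j 1)
        - X (ℓ1 i 0, ℓ2 j 1) * X (ℓ1 i 1, ℓ2 j 0) : MvPolynomial (α × β) K) ∈ J :=
      Ideal.subset_span ⟨ℓ1 i 0, ℓ1 i 1, ℓ2 j 0, ℓ2 j 1, (hadj1 i).1, (hadj2 j).1, rfl⟩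
    have hD2 : (X (ℓ1 i 0, ℓ2 j 1) * X (ℓ1 i 1, ℓ2 j 2)
        - X (ℓ1 i 0, ℓ2 j 2) * X (ℓ1 i 1, ℓ2 j 1) : MvPolynomial (α × β) K) ∈ J :=
      Ideal.subset_span ⟨ℓ1 i 0, ℓ1 i 1, ℓ2 j 1, ℓ2 j 2, (hadj1 i).1, (hadj2 j).2, rfl⟩
    have hD3 : (X (ℓ1 i 1, ℓ2 j 0) * X (ℓ1 i 2, ℓ2 j 1)
        - X (ℓ1 i 1, ℓ2 j 1) * X (ℓ1 i 2, ℓ2 j 0) : MvPolynomial (α × β) K) ∈ J :=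
      Ideal.subset_span ⟨ℓ1 i 1, ℓ1 i 2, ℓ2 j 0, ℓ2 j 1, (hadj1 i).2, (hadj2 j).1, rfl⟩
    have hD4 : (X (ℓ1 i 1, ℓ2 j 1) * X (ℓ1 i 2, ℓ2 j 2)
        - X (ℓ1 i 1, ℓ2 j 2) * X (ℓ1 i 2, ℓ2 j 1) : MvPolynomial (α × β) K) ∈ J :=
      Ideal.subset_span ⟨ℓ1 i 1, ℓ1 i 2, ℓ2 j 1, ℓ2 j 2, (hadj1 i).2, (hadj2 j).2, rfl⟩
    have hid : Pm K ℓ1 ℓ2 i j ^ 2 =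
        ((-2) * X (ℓ1 i 0, ℓ2 j 2) * X (ℓ1 i 1, ℓ2 j 1) * X (ℓ1 i 2, ℓ2 j 0) * X (ℓ1 i 2, ℓ2 j 2)
          + X (ℓ1 i 0, ℓ2 j 1) * X (ℓ1 i 1, ℓ2 j 2) * X (ℓ1 i 2, ℓ2 j 0) * X (ℓ1 i 2, ℓ2 j 2)
          + X (ℓ1 i 0, ℓ2 j 0) * X (ℓ1 i 1, ℓ2 j 1) * X (ℓ1 i 2, ℓ2 j 2) * X (ℓ1 i 2, ℓ2 j 2))
          * (X (ℓ1 i 0, ℓ2 j 0) * X (ℓ1 i 1, ℓ2 j 1)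
            - X (ℓ1 i 0, ℓ2 j 1) * X (ℓ1 i 1, ℓ2 j 0))
        + ((-1) * X (ℓ1 i 0, ℓ2 j 2) * X (ℓ1 i 1, ℓ2 j 0) * X (ℓ1 i 2, ℓ2 j 0) * X (ℓ1 i 2, ℓ2 j 1)
          + X (ℓ1 i 0, ℓ2 j 1) * X (ℓ1 i 1, ℓ2 j 0) * X (ℓ1 i 2, ℓ2 j 0) * X (ℓ1 i 2, ℓ2 j 2))
          * (X (ℓ1 i 0, ℓ2 j 1) * X (ℓ1 i 1, ℓ2 j 2)
            - X (ℓ1 i 0, ℓ2 j 2) * X (ℓ1 i 1, ℓ2 j 1))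
        + ((-1) * X (ℓ1 i 0, ℓ2 j 2) * X (ℓ1 i 0, ℓ2 j 2) * X (ℓ1 i 1, ℓ2 j 1) * X (ℓ1 i 2, ℓ2 j 0)
          + X (ℓ1 i 0, ℓ2 j 0) * X (ℓ1 i 0, ℓ2 j 1) * X (ℓ1 i 1, ℓ2 j 2) * X (ℓ1 i 2, ℓ2 j 2))
          * (X (ℓ1 i 1, ℓ2 j 0) * X (ℓ1 i 2, ℓ2 j 1)
            - X (ℓ1 i 1, ℓ2 j 1) * X (ℓ1 i 2, ℓ2 j 0))
        + ((-1) * X (ℓ1 i 0, ℓ2 j 1) * X (ℓ1 i 0, ℓ2 j 2) * X (ℓ1 i 1, ℓ2 j 0) * X (ℓ1 i 2, ℓ2 j 0)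
          + X (ℓ1 i 0, ℓ2 j 0) * X (ℓ1 i 0, ℓ2 j 1) * X (ℓ1 i 1, ℓ2 j 0) * X (ℓ1 i 2, ℓ2 j 2))
          * (X (ℓ1 i 1, ℓ2 j 1) * X (ℓ1 i 2, ℓ2 j 2)
            - X (ℓ1 i 1, ℓ2 j 2) * X (ℓ1 i 2, ℓ2 j 1)) := by
      unfold Pm
      ring
    rw [hid]
    exact add_mem (add_mem (add_mem (J.mul_mem_left _ hD1) (J.mul_mem_left _ hD2))
      (J.mul_mem_left _ hD3)) (J.mul_mem_left _ hD4)
  have hw : (∏ ij : Fin r × Fin s, Pm K ℓ1 ℓ2 ij.1 ij.2) ∈ J.radical ^ (r * s) := by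
    have h := Ideal.prod_mem_prod (s := (Finset.univ : Finset (Fin r × Fin s)))
      (I := fun _ => J.radical) (x := fun ij => Pm K ℓ1 ℓ2 ij.1 ij.2)
      (fun ij _ => hPmem ij)
    rwa [Finset.prod_const, Finset.card_univ, Fintype.card_prod, Fintype.card_fin,
      Fintype.card_fin] at h
  have h0 := lam_pairIdeal K hinj1 hinj2 hstruct1 hstruct2 (hle hw)
  rw [lam_w K ℓ1 ℓ2 hinj1 hinj2] at h0
  exact one_ne_zero h0

theorem stmt16 (K : Type) [Field K] (m n : ℕ)
    (G1 : SimpleGraph (Fin m)) (G2 : SimpleGraph (Fin n))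
    (T1 : Set (Fin m)) (T2 : Set (Fin n)) (r s : ℕ)
    (C1 : Fin r → (G1.induce T1ᶜ).ConnectedComponent) (hC1 : Function.Injective C1)
    (h1 : ∀ i : Fin r, ∃ a b c : ↥T1ᶜ,
      (G1.induce T1ᶜ).connectedComponentMk a = C1 i ∧
      (G1.induce T1ᶜ).Adj a b ∧ (G1.induce T1ᶜ).Adj b c ∧
      ¬ (G1.induce T1ᶜ).Adj a c ∧ a ≠ c)
    (C2 : Fin s → (G2.induce T2ᶜ).ConnectedComponent) (hC2 : Function.Injective C2)
    (h2 : ∀ i : Fin s, ∃ a b c : ↥T2ᶜ,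
      (G2.induce T2ᶜ).connectedComponentMk a = C2 i ∧
      (G2.induce T2ᶜ).Adj a b ∧ (G2.induce T2ᶜ).Adj b c ∧
      ¬ (G2.induce T2ᶜ).Adj a c ∧ a ≠ c) :
    ¬ ((pairIdeal K G1 G2).radical ^ (r * s) ≤ pairIdeal K G1 G2) := by
  classical
  choose a1 b1 c1 hcomp1 hab1 hbc1 hnac1 hne1 using h1
  choose a2 b2 c2 hcomp2 hab2 hbc2 hnac2 hne2 using h2
  set W1 : Fin r → Fin 3 → ↥T1ᶜ := fun i ρ => ![a1 i, b1 i, c1 i] ρ with hW1def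
  set W2 : Fin s → Fin 3 → ↥T2ᶜ := fun j σ => ![a2 j, b2 j, c2 j] σ with hW2def
  set ℓ1 : Fin r → Fin 3 → Fin m := fun i ρ => ↑(W1 i ρ) with hℓ1def
  set ℓ2 : Fin s → Fin 3 → Fin n := fun j σ => ↑(W2 j σ) with hℓ2def
  have hcompW1 : ∀ i ρ, (G1.induce T1ᶜ).connectedComponentMk (W1 i ρ) = C1 i := by
    intro i ρ
    fin_cases ρ
    · exact hcomp1 i
    · show (G1.induce T1ᶜ).connectedComponentMk (b1 i) = C1 i
      rw [← hcomp1 i]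
      exact (SimpleGraph.ConnectedComponent.connectedComponentMk_eq_of_adj (hab1 i)).symm
    · show (G1.induce T1ᶜ).connectedComponentMk (c1 i) = C1 i
      rw [← hcomp1 i]
      exact ((SimpleGraph.ConnectedComponent.connectedComponentMk_eq_of_adj (hab1 i)).trans
        (SimpleGraph.ConnectedComponent.connectedComponentMk_eq_of_adj (hbc1 i))).symm
  have hcompW2 : ∀ j σ, (G2.induce T2ᶜ).connectedComponentMk (W2 j σ) = C2 j := by
    intro j σ
    fin_cases σ
    · exact hcomp2 j
    · show (G2.induce T2ᶜ).connectedComponentMk (b2 j) = C2 j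
      rw [← hcomp2 j]
      exact (SimpleGraph.ConnectedComponent.connectedComponentMk_eq_of_adj (hab2 j)).symm
    · show (G2.induce T2ᶜ).connectedComponentMk (c2 j) = C2 j
      rw [← hcomp2 j]
      exact ((SimpleGraph.ConnectedComponent.connectedComponentMk_eq_of_adj (hab2 j)).trans
        (SimpleGraph.ConnectedComponent.connectedComponentMk_eq_of_adj (hbc2 j))).symm
  have hinj1 : ∀ i ρ i' ρ', ℓ1 i ρ = ℓ1 i' ρ' → i = i' ∧ ρ = ρ' := by
    intro i ρ i' ρ' h
    have hsub : W1 i ρ = W1 i' ρ' := Subtype.coe_injective h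
    have hii : i = i' := hC1 (by rw [← hcompW1 i ρ, hsub, hcompW1])
    subst hii
    refine ⟨rfl, ?_⟩
    have hd1 := (hab1 i).ne
    have hd2 := (hbc1 i).ne
    have hd3 := hne1 i
    fin_cases ρ <;> fin_cases ρ' <;>
      first
        | rfl
        | exact absurd hsub hd1
        | exact absurd hsub.symm hd1
        | exact absurd hsub hd2
        | exact absurd hsub.symm hd2
        | exact absurd hsub hd3
        | exact absurd hsub.symm hd3
  have hinj2 : ∀ j σ j' σ', ℓ2 j σ = ℓ2 j' σ' → j = j' ∧ σ = σ' := by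
    intro j σ j' σ' h
    have hsub : W2 j σ = W2 j' σ' := Subtype.coe_injective h
    have hjj : j = j' := hC2 (by rw [← hcompW2 j σ, hsub, hcompW2])
    subst hjj
    refine ⟨rfl, ?_⟩
    have hd1 := (hab2 j).ne
    have hd2 := (hbc2 j).ne
    have hd3 := hne2 j
    fin_cases σ <;> fin_cases σ' <;>
      first
        | rfl
        | exact absurd hsub hd1
        | exact absurd hsub.symm hd1
        | exact absurd hsub hd2
        | exact absurd hsub.symm hd2
        | exact absurd hsub hd3
        | exact absurd hsub.symm hd3
  have hadj1 : ∀ i, G1.Adj (ℓ1 i 0) (ℓ1 i 1) ∧ G1.Adj (ℓ1 i 1) (ℓ1 i 2) :=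
    fun i => ⟨SimpleGraph.comap_adj.mp (hab1 i), SimpleGraph.comap_adj.mp (hbc1 i)⟩
  have hadj2 : ∀ j, G2.Adj (ℓ2 j 0) (ℓ2 j 1) ∧ G2.Adj (ℓ2 j 1) (ℓ2 j 2) :=
    fun j => ⟨SimpleGraph.comap_adj.mp (hab2 j), SimpleGraph.comap_adj.mp (hbc2 j)⟩
  have hstruct1 : ∀ i ρ i' ρ', G1.Adj (ℓ1 i ρ) (ℓ1 i' ρ') → i = i' ∧ RoleAdj ρ ρ' := by
    intro i ρ i' ρ' hadj
    have hadjInd : (G1.induce T1ᶜ).Adj (W1 i ρ) (W1 i' ρ') := SimpleGraph.comap_adj.mpr hadj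
    have hii : i = i' := hC1 (by
      rw [← hcompW1 i ρ, ← hcompW1 i' ρ']
      exact SimpleGraph.ConnectedComponent.connectedComponentMk_eq_of_adj hadjInd)
    subst hii
    refine ⟨rfl, ?_⟩
    fin_cases ρ <;> fin_cases ρ' <;>
      first
        | exact absurd hadjInd ((G1.induce T1ᶜ).irrefl)
        | exact absurd hadjInd (hnac1 i)
        | exact absurd hadjInd.symm (hnac1 i)
        | exact Or.inl ⟨rfl, rfl⟩
        | exact Or.inr (Or.inl ⟨rfl, rfl⟩)
        | exact Or.inr (Or.inr (Or.inl ⟨rfl, rfl⟩))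
        | exact Or.inr (Or.inr (Or.inr ⟨rfl, rfl⟩))
  have hstruct2 : ∀ j σ j' σ', G2.Adj (ℓ2 j σ) (ℓ2 j' σ') → j = j' ∧ RoleAdj σ σ' := by
    intro j σ j' σ' hadj
    have hadjInd : (G2.induce T2ᶜ).Adj (W2 j σ) (W2 j' σ') := SimpleGraph.comap_adj.mpr hadj
    have hjj : j = j' := hC2 (by
      rw [← hcompW2 j σ, ← hcompW2 j' σ']
      exact SimpleGraph.ConnectedComponent.connectedComponentMk_eq_of_adj hadjInd)
    subst hjj
    refine ⟨rfl, ?_⟩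
    fin_cases σ <;> fin_cases σ' <;>
      first
        | exact absurd hadjInd ((G2.induce T2ᶜ).irrefl)
        | exact absurd hadjInd (hnac2 j)
        | exact absurd hadjInd.symm (hnac2 j)
        | exact Or.inl ⟨rfl, rfl⟩
        | exact Or.inr (Or.inl ⟨rfl, rfl⟩)
        | exact Or.inr (Or.inr (Or.inl ⟨rfl, rfl⟩))
        | exact Or.inr (Or.inr (Or.inr ⟨rfl, rfl⟩))
  exact main_lower_bound K G1 G2 ℓ1 ℓ2 hinj1 hinj2 hadj1 hadj2 hstruct1 hstruct2
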